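/- Let f be a polynomial with rational coefficients of degree d ≥ 1. Then there exists a real constant C > 0 such that for every real B ≥ 1, the number of rational numbers y in the image of f (i.e., y = f(x) for some x ∈ ℚ) with H(y) ≤ B is at most the number of rational numbers z with H(z) ≤ C·B^{1/d}. -/

import Mathlib

open Polynomial

/-- The height of a rational number `x` (in lowest terms): the maximum of the absolute
value of its numerator and its denominator. -/
def ratHeight (x : ℚ) : ℕ := max x.num.natAbs x.den

private lemma gcd_pow_dvd_pow_gcd (a b k : ℕ) : Nat.gcd a (b ^ k) ∣ Nat.gcd a b ^ k := by
  induction k with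
  | zero => simp
  | succ k ih =>
      calc Nat.gcd a (b ^ (k+1)) = Nat.gcd a (b * b ^ k) := by rw [pow_succ']
      _ ∣ Nat.gcd a b * Nat.gcd a (b ^ k) := Nat.gcd_mul_right_dvd_mul_gcd a b (b ^ k)
      _ ∣ Nat.gcd a b * Nat.gcd a b ^ k := mul_dvd_mul_left _ ih
      _ = Nat.gcd a b ^ (k+1) := (pow_succ' _ _).symm

/-- Key height estimate: `H(x)^d ≤ cst * H(f(x))` for a uniform constant `cst`. -/
private lemma ratHeight_pow_le (f : ℚ[X]) (hd : 1 ≤ f.natDegree) :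
    ∃ cst : ℕ, 1 ≤ cst ∧ ∀ x : ℚ,
      ratHeight x ^ f.natDegree ≤ cst * ratHeight (f.eval x) := by
  classical
  have hf0 : f ≠ 0 := fun h0 => by simp [h0] at hd
  have hl : f.coeff f.natDegree ≠ 0 := by
    rw [Polynomial.coeff_natDegree]
    exact Polynomial.leadingCoeff_ne_zero.mpr hf0
  set d := f.natDegree with hdd
  set D : ℕ := ∏ i ∈ Finset.range (d+1), (f.coeff i).den with hDdef
  have hD0 : 0 < D := Finset.prod_pos (fun i _ => (f.coeff i).pos)
  set c : ℕ → ℤ := fun i => ((D:ℚ) * f.coeff i).num with hcdef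
  have hc : ∀ i ∈ Finset.range (d+1), ((c i : ℚ)) = (D:ℚ) * f.coeff i := by
    intro i hi
    obtain ⟨k, hk⟩ : (f.coeff i).den ∣ D := Finset.dvd_prod_of_mem _ hi
    set q := f.coeff i with hq
    have h2 : (D:ℚ) * q = ((q.num * k : ℤ) : ℚ) := by
      push_cast
      rw [hk]
      push_cast
      calc ((q.den : ℚ) * k) * q = ((q:ℚ) * q.den) * k := by ring
      _ = (q.num : ℚ) * k := by rw [Rat.mul_den_eq_num]
    have h3 : ((D:ℚ) * q).num = q.num * k := by rw [h2, Rat.num_intCast]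
    calc ((c i : ℤ) : ℚ) = ((q.num * k : ℤ) : ℚ) := by rw [hcdef]; simp only; rw [h3]
    _ = (D:ℚ) * q := h2.symm
  have hcd0 : c d ≠ 0 := by
    intro h
    have h5 := hc d (Finset.self_mem_range_succ d)
    rw [h] at h5
    have : (D:ℚ) ≠ 0 := by positivity
    exact hl (by push_cast at h5; exact (mul_eq_zero.mp h5.symm).resolve_left this)
  have hcd1 : 1 ≤ (c d).natAbs := Nat.one_le_iff_ne_zero.2 (Int.natAbs_ne_zero.2 hcd0)
  set S := ∑ i ∈ Finset.range (d+1), (c i).natAbs with hS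
  have hScd : (c d).natAbs ≤ S := Finset.single_le_sum (f := fun i => (c i).natAbs)
    (fun i _ => Nat.zero_le _) (Finset.self_mem_range_succ d)
  have hS1 : 1 ≤ S := le_trans hcd1 hScd
  set K := 2 * S with hK
  set A := K ^ d + 2 with hA
  set G0 := D * (c d).natAbs ^ d with hG0
  have hG0pos : 0 < G0 := by
    have : 0 < (c d).natAbs ^ d := Nat.pow_pos hcd1
    exact Nat.mul_pos hD0 this
  refine ⟨A * G0, Nat.one_le_iff_ne_zero.mpr (by positivity), ?_⟩
  intro x
  set y : ℚ := f.eval x with hy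
  set b := x.den with hb
  have hb1 : 1 ≤ b := x.pos
  set N : ℤ := ∑ i ∈ Finset.range (d+1), c i * x.num ^ i * (x.den:ℤ) ^ (d - i) with hNdef
  -- the evaluation identity
  have hiden : y * ((D:ℚ) * (x.den:ℚ) ^ d) = (N:ℚ) := by
    rw [hy, Polynomial.eval_eq_sum_range, ← hdd, hNdef]
    push_cast
    rw [Finset.sum_mul]
    refine Finset.sum_congr rfl ?_
    intro i hi
    have hiled : i ≤ d := by simpa [Nat.lt_succ_iff] using hi
    have hx : (x.num : ℚ) = x * x.den := by
      rw [Rat.mul_den_eq_num]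
    have hpow : (x.num : ℚ) ^ i * (x.den:ℚ) ^ (d - i) = x ^ i * (x.den:ℚ) ^ d := by
      rw [hx, mul_pow, mul_assoc, ← pow_add]
      congr 2
      omega
    rw [hc i hi, mul_assoc (((D:ℚ)) * f.coeff i), hpow]
    ring
  -- cross multiply
  have hcross : y.num * ((D:ℤ) * (x.den:ℤ) ^ d) = N * y.den := by
    have h := hiden
    rw [← Rat.num_div_den y] at h
    have hden : ((y.den:ℚ)) ≠ 0 := by positivity
    field_simp at h
    have h' : y.num * (D:ℤ) * ((x.den ^ d : ℕ) : ℤ) = (y.den:ℤ) * N := by exact_mod_cast h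
    push_cast at h' ⊢
    linarith
  -- produce the common factor e
  have hbz : ((x.den:ℤ)) ≠ 0 := by exact_mod_cast x.den_nz
  have hyz : ((y.den:ℤ)) ≠ 0 := by exact_mod_cast y.den_nz
  have hxcop : IsCoprime x.num (x.den:ℤ) := by
    rw [Int.isCoprime_iff_gcd_eq_one]
    simpa [Int.gcd] using x.reduced
  have hycop : IsCoprime y.num (y.den:ℤ) := by
    rw [Int.isCoprime_iff_gcd_eq_one]
    simpa [Int.gcd] using y.reduced
  have hden_dvd : (y.den:ℤ) ∣ (D:ℤ) * (x.den:ℤ) ^ d :=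
    hycop.symm.dvd_of_dvd_mul_left ⟨N, by linarith [hcross]⟩
  obtain ⟨e, he⟩ := hden_dvd
  have hyd0 : (0:ℤ) < y.den := by positivity
  have hM0 : (0:ℤ) < (D:ℤ) * (x.den:ℤ) ^ d := by positivity
  have he0 : 0 < e := by nlinarith
  have hnume : y.num * e = N := by
    have h1 : (y.num * e) * y.den = N * y.den := by rw [← hcross, he]; ring
    exact mul_right_cancel₀ hyz h1
  -- gcd chain : e.natAbs divides G0
  have heG0 : e.natAbs ∣ G0 := by
    have hg1 : (((Int.gcd N x.den) : ℤ)) ∣ c d := by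
      have hbdvd : (x.den:ℤ) ∣ N - c d * x.num ^ d := by
        rw [hNdef, Finset.sum_range_succ]
        simp only [Nat.sub_self, pow_zero, mul_one, add_sub_cancel_right]
        refine Finset.dvd_sum ?_
        intro i hi
        have : (x.den:ℤ) ∣ (x.den:ℤ) ^ (d - i) :=
          dvd_pow_self _ (by simp at hi; omega)
        exact Dvd.dvd.mul_left this _
      have h2 : ((Int.gcd N x.den : ℤ)) ∣ c d * x.num ^ d := by
        have hN : ((Int.gcd N x.den : ℤ)) ∣ N := Int.gcd_dvd_left _ _
        have hbd : ((Int.gcd N x.den : ℤ)) ∣ (x.den:ℤ) := Int.gcd_dvd_right _ _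
        have h3 := dvd_sub hN (hbd.trans hbdvd)
        have h4 : N - (N - c d * x.num ^ d) = c d * x.num ^ d := by ring
        rwa [h4] at h3
      have hcop : IsCoprime ((Int.gcd N x.den : ℤ)) (x.num ^ d) :=
        (hxcop.symm.of_isCoprime_of_dvd_left (Int.gcd_dvd_right _ _)).pow_right
      exact hcop.dvd_of_dvd_mul_right h2
    have hg1n : Nat.gcd N.natAbs x.den ∣ (c d).natAbs := by
      have := Int.natAbs_dvd_natAbs.mpr hg1
      simpa [Int.gcd] using this
    have heN : e ∣ N := ⟨y.num, by linarith [hnume]⟩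
    have heM : e ∣ (D:ℤ) * (x.den:ℤ) ^ d := ⟨y.den, by linarith [he]⟩
    have hekey : e.natAbs ∣ Nat.gcd N.natAbs (D * x.den ^ d) := by
      refine Nat.dvd_gcd (Int.natAbs_dvd_natAbs.mpr heN) ?_
      have := Int.natAbs_dvd_natAbs.mpr heM
      simpa [Int.natAbs_mul, Int.natAbs_pow] using this
    calc e.natAbs ∣ Nat.gcd N.natAbs (D * x.den ^ d) := hekey
    _ ∣ Nat.gcd N.natAbs D * Nat.gcd N.natAbs (x.den ^ d) := Nat.gcd_mul_right_dvd_mul_gcd _ _ _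
    _ ∣ D * (c d).natAbs ^ d := by
        exact mul_dvd_mul (Nat.gcd_dvd_right _ _)
          ((gcd_pow_dvd_pow_gcd _ _ _).trans (pow_dvd_pow_of_dvd hg1n d))
  have heleG0 : e.natAbs ≤ G0 := Nat.le_of_dvd hG0pos heG0
  -- inequality 1 : max N.natAbs (b^d) ≤ G0 * ratHeight y
  have hineq1 : max N.natAbs (b ^ d) ≤ G0 * ratHeight y := by
    have hNabs : N.natAbs = y.num.natAbs * e.natAbs := by
      rw [← hnume, Int.natAbs_mul]
    have hMabs : D * b ^ d = y.den * e.natAbs := by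
      have := congrArg Int.natAbs he
      simpa [Int.natAbs_mul, Int.natAbs_pow] using this
    refine max_le ?_ ?_
    · calc N.natAbs = y.num.natAbs * e.natAbs := hNabs
      _ ≤ ratHeight y * G0 :=
        Nat.mul_le_mul (le_max_left _ _) heleG0
      _ = G0 * ratHeight y := mul_comm _ _
    · calc b ^ d ≤ D * b ^ d := Nat.le_mul_of_pos_left _ hD0
      _ = y.den * e.natAbs := hMabs
      _ ≤ ratHeight y * G0 := Nat.mul_le_mul (le_max_right _ _) heleG0
      _ = G0 * ratHeight y := mul_comm _ _
  -- inequality 2 (archimedean) : ratHeight x ^ d ≤ A * max N.natAbs (b^d)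
  have hineq2 : ratHeight x ^ d ≤ A * max N.natAbs (b ^ d) := by
    set na := x.num.natAbs with hna
    rcases le_or_gt na (K * b) with hcase | hcase
    · have h1 : max na b ≤ K * b := by
        refine max_le hcase ?_
        calc b = 1 * b := (one_mul b).symm
        _ ≤ K * b := Nat.mul_le_mul_right b (by omega)
      calc (max na b) ^ d ≤ (K * b) ^ d := Nat.pow_le_pow_left h1 d
      _ = K ^ d * b ^ d := mul_pow K b d
      _ ≤ K ^ d * max N.natAbs (b ^ d) := Nat.mul_le_mul_left _ (le_max_right _ _)
      _ ≤ (K ^ d + 2) * max N.natAbs (b ^ d) := Nat.mul_le_mul_right _ (by omega)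
    · have hbna : b ≤ na := by
        calc b = 1 * b := (one_mul b).symm
        _ ≤ K * b := Nat.mul_le_mul_right b (by omega)
        _ ≤ na := hcase.le
      have hmax : max na b = na := max_eq_left hbna
      set T : ℤ := ∑ i ∈ Finset.range d, c i * x.num ^ i * (x.den:ℤ) ^ (d - i) with hT
      have hNTL : N = T + c d * x.num ^ d := by
        rw [hNdef, Finset.sum_range_succ, Nat.sub_self, pow_zero, mul_one]
      have hTle : T.natAbs ≤ S * (na ^ (d-1) * b) := by
        calc T.natAbs ≤ ∑ i ∈ Finset.range d, (c i * x.num ^ i * (x.den:ℤ) ^ (d - i)).natAbs :=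
              nat_abs_sum_le _ _
        _ ≤ ∑ i ∈ Finset.range d, (c i).natAbs * (na ^ (d-1) * b) := by
            refine Finset.sum_le_sum ?_
            intro i hi
            have hid : i < d := Finset.mem_range.mp hi
            rw [Int.natAbs_mul, Int.natAbs_mul, Int.natAbs_pow, Int.natAbs_pow]
            have hden : (x.den:ℤ).natAbs = b := Int.natAbs_natCast _
            rw [hden, mul_assoc]
            refine Nat.mul_le_mul_left _ ?_
            have hdi : d - i = (d - 1 - i) + 1 := by omega
            calc na ^ i * b ^ (d - i) = na ^ i * (b ^ (d - 1 - i) * b) := by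
                  rw [hdi, pow_succ]
            _ ≤ na ^ i * (na ^ (d - 1 - i) * b) := by
                refine Nat.mul_le_mul_left _ (Nat.mul_le_mul_right _ (Nat.pow_le_pow_left hbna _))
            _ = na ^ (d - 1) * b := by
                have hdi2 : i + (d - 1 - i) = d - 1 := by omega
                rw [← mul_assoc, ← pow_add, hdi2]
        _ ≤ ∑ i ∈ Finset.range (d+1), (c i).natAbs * (na ^ (d-1) * b) := by
            refine Finset.sum_le_sum_of_subset ?_
            exact Finset.range_subset_range.mpr (by omega)
        _ = S * (na ^ (d-1) * b) := by rw [hS, Finset.sum_mul]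
      have hL : na ^ d ≤ (c d * x.num ^ d).natAbs := by
        rw [Int.natAbs_mul, Int.natAbs_pow]
        calc na ^ d = 1 * na ^ d := (one_mul _).symm
        _ ≤ (c d).natAbs * na ^ d := Nat.mul_le_mul_right _ hcd1
      have htri : na ^ d ≤ N.natAbs + T.natAbs := by
        have hsub : (c d * x.num ^ d) = N - T := by rw [hNTL]; ring
        calc na ^ d ≤ (c d * x.num ^ d).natAbs := hL
        _ = (N - T).natAbs := by rw [hsub]
        _ ≤ N.natAbs + T.natAbs := Int.natAbs_sub_le N T
      have hkey : 2 * (S * (na ^ (d-1) * b)) ≤ na ^ d := by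
        have h1 : 2 * S * b ≤ na := hcase.le
        calc 2 * (S * (na ^ (d-1) * b)) = na ^ (d-1) * (2 * S * b) := by ring
        _ ≤ na ^ (d-1) * na := Nat.mul_le_mul_left _ h1
        _ = na ^ d := by
            have hd1 : (d - 1) + 1 = d := by omega
            rw [← pow_succ, hd1]
      have hfin : na ^ d ≤ 2 * N.natAbs := by omega
      calc (max na b) ^ d = na ^ d := by rw [hmax]
      _ ≤ 2 * N.natAbs := hfin
      _ ≤ 2 * max N.natAbs (b ^ d) := Nat.mul_le_mul_left _ (le_max_left _ _)
      _ ≤ (K ^ d + 2) * max N.natAbs (b ^ d) := Nat.mul_le_mul_right _ (by omega)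
  calc ratHeight x ^ d ≤ A * max N.natAbs (b ^ d) := hineq2
  _ ≤ A * (G0 * ratHeight y) := Nat.mul_le_mul_left _ hineq1
  _ = (A * G0) * ratHeight y := (mul_assoc _ _ _).symm

/-- Rationals of bounded height form a finite set. -/
private lemma finite_ratHeight_le (T : ℝ) : {z : ℚ | (ratHeight z : ℝ) ≤ T}.Finite := by
  apply Set.Finite.of_finite_image (f := fun z : ℚ => (z.num, z.den))
  · apply Set.Finite.subset
      ((Set.finite_Icc (-(⌊T⌋₊:ℤ)) (⌊T⌋₊:ℤ)).prod (Set.finite_Icc 0 ⌊T⌋₊))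
    rintro ⟨p, q⟩ ⟨z, hz, hzeq⟩
    simp only [Prod.mk.injEq] at hzeq
    obtain ⟨rfl, rfl⟩ := hzeq
    simp only [Set.mem_setOf_eq] at hz
    have h1 : ratHeight z ≤ ⌊T⌋₊ := Nat.le_floor hz
    have hnum : z.num.natAbs ≤ ⌊T⌋₊ := le_trans (le_max_left _ _) h1
    have hden : z.den ≤ ⌊T⌋₊ := le_trans (le_max_right _ _) h1
    constructor
    · simp only [Set.mem_Icc]
      constructor
      · have h2 : (z.num.natAbs : ℤ) ≤ (⌊T⌋₊ : ℤ) := by exact_mod_cast hnum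
        have h3 := Int.natAbs_le_iff_sq_le.mp (le_refl z.num.natAbs)
        omega
      · have h2 : (z.num.natAbs : ℤ) ≤ (⌊T⌋₊ : ℤ) := by exact_mod_cast hnum
        omega
    · simp only [Set.mem_Icc]
      exact ⟨Nat.zero_le _, hden⟩
  · intro z1 _ z2 _ h
    exact Rat.ext (congrArg Prod.fst h) (congrArg Prod.snd h)

/-- For a polynomial `f ∈ ℚ[X]` of degree `d ≥ 1` there is a constant
`C > 0` such that for every real `B ≥ 1`, the number of rationals of height `≤ B` in the
image of `f` is at most the number of rationals of height `≤ C·B^{1/d}`. -/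
theorem image_height_count_le (f : ℚ[X]) (hd : 1 ≤ f.natDegree) :
    ∃ C : ℝ, 0 < C ∧ ∀ B : ℝ, 1 ≤ B →
      {y : ℚ | (∃ x : ℚ, f.eval x = y) ∧ (ratHeight y : ℝ) ≤ B}.ncard ≤
      {z : ℚ | (ratHeight z : ℝ) ≤ C * B ^ (1 / (f.natDegree : ℝ))}.ncard := by
  classical
  obtain ⟨cst, hcst1, hkey⟩ := ratHeight_pow_le f hd
  set d := f.natDegree with hdd
  have hd0 : (0:ℝ) < d := by exact_mod_cast hd
  have hcstR : (1:ℝ) ≤ cst := by exact_mod_cast hcst1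
  refine ⟨(cst:ℝ), by positivity, ?_⟩
  intro B hB
  set φ : ℚ → ℚ := fun y => if h : ∃ x : ℚ, f.eval x = y then h.choose else 0 with hφ
  have hφev : ∀ y : ℚ, (∃ x : ℚ, f.eval x = y) → f.eval (φ y) = y := by
    intro y hex
    rw [hφ]
    simp only [dif_pos hex]
    exact hex.choose_spec
  refine Set.ncard_le_ncard_of_injOn φ ?_ ?_ (finite_ratHeight_le _)
  · rintro y ⟨hex, hyB⟩
    have hev : f.eval (φ y) = y := hφev y hex
    show (ratHeight (φ y) : ℝ) ≤ cst * B ^ (1 / (d:ℝ))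
    set t : ℝ := (ratHeight (φ y) : ℝ) with ht
    have ht0 : 0 ≤ t := by positivity
    have h1 : t ^ d ≤ (cst:ℝ) * B := by
      have h2 : ratHeight (φ y) ^ d ≤ cst * ratHeight y := by
        have := hkey (φ y)
        rwa [hev] at this
      have h3 : (ratHeight (φ y) : ℝ) ^ d ≤ (cst:ℝ) * (ratHeight y : ℝ) := by
        exact_mod_cast h2
      calc t ^ d ≤ (cst:ℝ) * (ratHeight y : ℝ) := h3
      _ ≤ (cst:ℝ) * B := by
          refine mul_le_mul_of_nonneg_left hyB (by positivity)
    have hdne : (d:ℝ) ≠ 0 := ne_of_gt hd0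
    have hstep : t = (t ^ (d:ℕ) : ℝ) ^ (1 / (d:ℝ)) := by
      rw [← Real.rpow_natCast t d, ← Real.rpow_mul ht0]
      rw [mul_one_div, div_self hdne, Real.rpow_one]
    rw [hstep]
    calc (t ^ (d:ℕ) : ℝ) ^ (1 / (d:ℝ)) ≤ ((cst:ℝ) * B) ^ (1 / (d:ℝ)) := by
          refine Real.rpow_le_rpow (by positivity) h1 (by positivity)
    _ = (cst:ℝ) ^ (1 / (d:ℝ)) * B ^ (1 / (d:ℝ)) := Real.mul_rpow (by positivity) (by linarith)
    _ ≤ (cst:ℝ) * B ^ (1 / (d:ℝ)) := by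
        refine mul_le_mul_of_nonneg_right ?_ (by positivity)
        have h4 : (1:ℝ) / d ≤ 1 := by
          rw [div_le_one hd0]
          exact_mod_cast hd
        calc (cst:ℝ) ^ (1 / (d:ℝ)) ≤ (cst:ℝ) ^ (1:ℝ) :=
              Real.rpow_le_rpow_of_exponent_le hcstR h4
        _ = (cst:ℝ) := Real.rpow_one _
  · rintro y1 ⟨hex1, _⟩ y2 ⟨hex2, _⟩ heq
    rw [← hφev y1 hex1, ← hφev y2 hex2, heq]
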